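/- arXiv:2602.02432 — 2 statements merged into one kernel-verified Lean document; each statement's English description precedes it below -/
import Mathlib

section
/- Let X and U be topological spaces, f : Y → ℝ continuous, g : X × U → Y continuous, μ a probability measure on U, and c ∈ ℝ. Suppose for every x ∈ X that μ({u : f(g(x,u)) = c}) = 0. Then the function x ↦ μ({u : f(g(x,u)) ≥ c}) is continuous on X. -/
open MeasureTheory

/-- If `f` and `g` are continuous and `μ` places no mass on the limit state surface
`{u | f (g (x, u)) = c}` for each `x`, then the failure probability
`x ↦ μ {u | f (g (x, u)) ≥ c}` is continuous. -/
theorem failure_probability_continuous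
    {X U Y : Type*} [MetricSpace X] [TopologicalSpace U] [MeasurableSpace U]
    [OpensMeasurableSpace U] [TopologicalSpace Y]
    (μ : Measure U) [IsProbabilityMeasure μ]
    (f : Y → ℝ) (hf : Continuous f)
    (g : X × U → Y) (hg : Continuous g)
    (c : ℝ)
    (hnull : ∀ x : X, μ {u : U | f (g (x, u)) = c} = 0) :
    Continuous fun x : X => (μ {u : U | c ≤ f (g (x, u))}).toReal := by
  have hmble : ∀ x : X, MeasurableSet {u : U | c ≤ f (g (x, u))} := by
    intro x
    have : Continuous fun u : U => f (g (x, u)) :=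
      hf.comp (hg.comp (Continuous.prodMk_right x))
    exact measurableSet_le measurable_const this.measurable
  rw [continuous_iff_continuousAt]
  intro x
  have key : Filter.Tendsto (fun x' : X => μ {u : U | c ≤ f (g (x', u))}) (nhds x)
      (nhds (μ {u : U | c ≤ f (g (x, u))})) := by
    apply tendsto_measure_of_ae_tendsto_indicator_of_isFiniteMeasure (nhds x)
      (hmble x) (fun x' => hmble x')
    have hae : ∀ᵐ u ∂μ, f (g (x, u)) ≠ c := by
      have := hnull x
      rw [ae_iff]
      simpa using this
    filter_upwards [hae] with u hu
    rcases lt_or_gt_of_ne hu with h | h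
    · -- f (g (x,u)) < c : eventually both sides false
      have hcont : Continuous fun x' : X => f (g (x', u)) :=
        hf.comp (hg.comp (continuous_id.prodMk continuous_const))
      have : ∀ᶠ x' in nhds x, f (g (x', u)) < c :=
        (hcont.continuousAt).eventually_lt continuousAt_const h
      filter_upwards [this] with x' hx'
      constructor
      · intro hc; linarith
      · intro hc; linarith
    · have hcont : Continuous fun x' : X => f (g (x', u)) :=
        hf.comp (hg.comp (continuous_id.prodMk continuous_const))
      have : ∀ᶠ x' in nhds x, c < f (g (x', u)) :=
        (continuousAt_const).eventually_lt hcont.continuousAt h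
      filter_upwards [this] with x' hx'
      exact ⟨fun _ => le_of_lt h, fun _ => le_of_lt hx'⟩
  exact (ENNReal.tendsto_toReal (measure_ne_top μ _)).comp key
end

section
/- Let X be a metric space, U a measurable space with probability measure μ, Y_feas ⊆ Y a subset of a topological space Y, g : X × U → Y continuous, f : Y → ℝ continuous, and c ∈ ℝ. Suppose for every x ∈ X that μ({u : f(g(x,u)) = c}) = 0 and μ({u : g(x,u) ∈ ∂Y_feas}) = 0, where ∂Y_feas denotes the topological boundary. Then P(x) = μ({u : f(g(x,u)) ≥ c or g(x,u) ∉ Y_feas}) is continuous in x. If moreover X is compact and nonempty, P attains its minimum at some x* ∈ X. -/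
open MeasureTheory Filter Topology Set

/-- Continuity of the failure probability `P(x) = μ {u | f(g(x,u)) ≥ c or g(x,u) ∉ Y_feas}`,
and attainment of its minimum when `X` is compact and nonempty. -/
theorem failure_probability_continuous_and_min_attained
    {X U Y : Type*} [MetricSpace X] [TopologicalSpace U] [MeasurableSpace U]
    [OpensMeasurableSpace U] [TopologicalSpace Y]
    (μ : Measure U) [IsProbabilityMeasure μ]
    (Yfeas : Set Y)
    (g : X × U → Y) (hg : Continuous g)
    (f : Y → ℝ) (hf : Continuous f)
    (c : ℝ)
    (hnull₁ : ∀ x : X, μ {u : U | f (g (x, u)) = c} = 0)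
    (hnull₂ : ∀ x : X, μ {u : U | g (x, u) ∈ frontier Yfeas} = 0) :
    Continuous (fun x : X =>
        (μ {u : U | c ≤ f (g (x, u)) ∨ g (x, u) ∉ Yfeas}).toReal) ∧
      (CompactSpace X → Nonempty X →
        ∃ xstar : X, ∀ x : X,
          (μ {u : U | c ≤ f (g (xstar, u)) ∨ g (xstar, u) ∉ Yfeas}).toReal ≤
            (μ {u : U | c ≤ f (g (x, u)) ∨ g (x, u) ∉ Yfeas}).toReal) := by
  -- measurable surrogate sets
  set B : X → Set U := fun x => {u | c ≤ f (g (x, u)) ∨ g (x, u) ∈ (interior Yfeas)ᶜ} with hBdef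
  have hmeasB : ∀ x, MeasurableSet (B x) := by
    intro x
    have hcg : Continuous fun u : U => g (x, u) := hg.comp (Continuous.prodMk_right x)
    have h1 : MeasurableSet {u : U | c ≤ f (g (x, u))} :=
      (isClosed_le continuous_const (hf.comp hcg)).measurableSet
    have h2 : MeasurableSet {u : U | g (x, u) ∈ (interior Yfeas)ᶜ} :=
      (isOpen_interior.isClosed_compl.preimage hcg).measurableSet
    exact h1.union h2
  have hAB : ∀ x, μ {u : U | c ≤ f (g (x, u)) ∨ g (x, u) ∉ Yfeas} = μ (B x) := by
    intro x
    apply measure_congr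
    rw [Filter.eventuallyEq_set, MeasureTheory.ae_iff]
    refine measure_mono_null ?_ (hnull₂ x)
    intro u hu
    by_contra hfr
    apply hu
    have hiff : (g (x, u) ∉ Yfeas) ↔ g (x, u) ∈ (interior Yfeas)ᶜ := by
      constructor
      · intro h hI; exact h (interior_subset hI)
      · intro h hY
        exact hfr ⟨subset_closure hY, h⟩
    simp only [mem_setOf_eq, hBdef]
    tauto
  have key : Continuous fun x => (μ (B x)).toReal := by
    rw [continuous_iff_seqContinuous]
    intro xs x₀ hxs
    have hint : ∀ x, (μ (B x)).toReal = ∫ u, (B x).indicator (fun _ => (1 : ℝ)) u ∂μ := by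
      intro x
      rw [show (fun _ : U => (1:ℝ)) = (1 : U → ℝ) from rfl, integral_indicator_one (hmeasB x)]; rfl
    show Tendsto (fun n => (μ (B (xs n))).toReal) atTop (𝓝 (μ (B x₀)).toReal)
    simp only [hint]
    apply tendsto_integral_of_dominated_convergence (fun _ => (1 : ℝ))
    · intro n
      exact (measurable_const.indicator (hmeasB (xs n))).aestronglyMeasurable
    · exact integrable_const 1
    · intro n
      filter_upwards with u
      by_cases hu : u ∈ B (xs n) <;> simp [Set.indicator_apply, hu]
    · have h1 : ∀ᵐ u ∂μ, f (g (x₀, u)) ≠ c := by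
        rw [ae_iff]; simpa using hnull₁ x₀
      have h2 : ∀ᵐ u ∂μ, g (x₀, u) ∉ frontier Yfeas := by
        rw [ae_iff]; simpa using hnull₂ x₀
      filter_upwards [h1, h2] with u hu1 hu2
      have htend : Tendsto (fun n => (xs n, u)) atTop (𝓝 (x₀, u)) :=
        hxs.prodMk_nhds tendsto_const_nhds
      have hgt : Tendsto (fun n => g (xs n, u)) atTop (𝓝 (g (x₀, u))) :=
        (hg.tendsto _).comp htend
      have hft : Tendsto (fun n => f (g (xs n, u))) atTop (𝓝 (f (g (x₀, u)))) :=
        (hf.tendsto _).comp hgt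
      have hev : ∀ᶠ n in atTop, (u ∈ B (xs n) ↔ u ∈ B x₀) := by
        rcases lt_or_gt_of_ne hu1 with hlt | hgt'
        · -- f (g (x₀,u)) < c
          have hevf : ∀ᶠ n in atTop, f (g (xs n, u)) < c := hft.eventually (eventually_lt_nhds hlt)
          by_cases hmem : g (x₀, u) ∈ closure Yfeas
          · have hintm : g (x₀, u) ∈ interior Yfeas := by
              by_contra h; exact hu2 ⟨hmem, h⟩
            have hevg : ∀ᶠ n in atTop, g (xs n, u) ∈ interior Yfeas :=
              hgt.eventually_mem (isOpen_interior.mem_nhds hintm)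
            filter_upwards [hevf, hevg] with n h1' h2'
            simp only [hBdef, mem_setOf_eq, mem_compl_iff]
            constructor
            · rintro (h | h); exact absurd h (not_le.mpr h1'); exact absurd h2' h
            · rintro (h | h); exact absurd h (not_le.mpr hlt); exact absurd hintm h
          · have hevg : ∀ᶠ n in atTop, g (xs n, u) ∈ (closure Yfeas)ᶜ :=
              hgt.eventually_mem (isClosed_closure.isOpen_compl.mem_nhds hmem)
            filter_upwards [hevg] with n h2'
            have hx0 : g (x₀, u) ∈ (interior Yfeas)ᶜ := fun h => hmem (subset_closure (interior_subset h))
            have hxn : g (xs n, u) ∈ (interior Yfeas)ᶜ := fun h => h2' (subset_closure (interior_subset h))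
            simp only [hBdef, mem_setOf_eq, mem_compl_iff] at *
            tauto
        · -- c < f (g (x₀,u))
          have hevf : ∀ᶠ n in atTop, c < f (g (xs n, u)) := hft.eventually (eventually_gt_nhds hgt')
          filter_upwards [hevf] with n h1'
          simp only [hBdef, mem_setOf_eq]
          exact ⟨fun _ => Or.inl hgt'.le, fun _ => Or.inl h1'.le⟩
      have hev' : ∀ᶠ n in atTop,
          (B (xs n)).indicator (fun _ => (1:ℝ)) u = (B x₀).indicator (fun _ => (1:ℝ)) u := by
        filter_upwards [hev] with n hn
        by_cases h : u ∈ B x₀ <;> simp [Set.indicator_apply, h, hn.2, hn.1, hn]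
      exact tendsto_const_nhds.congr' (hev'.mono fun n hn => hn.symm)
  have hfun : (fun x : X => (μ {u : U | c ≤ f (g (x, u)) ∨ g (x, u) ∉ Yfeas}).toReal)
      = fun x => (μ (B x)).toReal := funext fun x => by rw [hAB x]
  refine ⟨by rw [hfun]; exact key, fun hX hne => ?_⟩
  obtain ⟨xstar, -, hx⟩ := isCompact_univ.exists_isMinOn univ_nonempty key.continuousOn
  refine ⟨xstar, fun x => ?_⟩
  rw [hAB xstar, hAB x]
  exact hx (mem_univ x)
end
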